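/- Let q ∈ UCRPQ(a, a*) over a finite alphabet Σ and let A, B ⊆ Σ. If q is A-bounded and B-bounded, then q is (A ∪ B)-bounded. -/

import Mathlib

namespace Paper

/-! ## Words -/

/-- `wpow w n` is the word `w` repeated `n` times. -/
def wpow {α : Type} (w : List α) (n : ℕ) : List α := (List.replicate n w).flatten

/-! ## Graph databases -/

/-- A graph database over the alphabet `α`: a finite set of vertices together with
labelled edges. -/
structure GDB (α : Type) : Type 1 where
  V : Type
  finV : Finite V
  edges : Set (V × α × V)

/-! ## Conjunctive queries -/

/-- A (Boolean) conjunctive query over `α`: a finite set of variables and a set of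
atoms `x —a→ y` with `a ∈ α`. -/
structure CQ (α : Type) : Type 1 where
  V : Type
  finV : Finite V
  atoms : Set (V × α × V)

variable {α : Type}

/-- `h` is a homomorphism from the CQ `p` to the CQ `p'`. -/
def CQ.Hom (p p' : CQ α) (h : p.V → p'.V) : Prop :=
  ∀ x a y, (x, a, y) ∈ p.atoms → (h x, a, h y) ∈ p'.atoms

/-- There is a homomorphism from the CQ `p` to the CQ `p'`. -/
def CQ.homTo (p p' : CQ α) : Prop := ∃ h, p.Hom p' h

/-- There is a homomorphism from the CQ `p` to the graph database `G`. -/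
def CQ.homToG (p : CQ α) (G : GDB α) : Prop :=
  ∃ h : p.V → G.V, ∀ x a y, (x, a, y) ∈ p.atoms → (h x, a, h y) ∈ G.edges

/-! ## CRPQs -/

/-- A (Boolean) conjunctive regular path query over alphabet `α` with variables `V`:
a finite conjunction of atoms `src i —lang i→ tgt i`. -/
structure CRPQ (α V : Type) where
  k : ℕ
  src : Fin k → V
  lang : Fin k → Set (List α)
  tgt : Fin k → V

variable {V : Type}

/-! ## Expansions -/

/-- Variables of an expansion before collapsing equality atoms: the original variables
plus, for each atom `i` expanded by the word `w i`, the fresh variables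
`z_1, …, z_{|w i| - 1}`. -/
def RawVar (q : CRPQ α V) (w : Fin q.k → List α) : Type :=
  V ⊕ (Σ i : Fin q.k, Fin ((w i).length - 1))

instance {q : CRPQ α V} [Finite V] {w : Fin q.k → List α} : Finite (RawVar q w) := by
  unfold RawVar; infer_instance

/-- The `j`-th variable (`0 ≤ j ≤ |w i|`) on the path expanding atom `i`:
position `0` is the source variable, position `|w i|` the target variable, and the
intermediate positions are fresh variables. -/
def node (q : CRPQ α V) (w : Fin q.k → List α) (i : Fin q.k) (j : ℕ) : RawVar q w :=
  if j = 0 then Sum.inl (q.src i)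
  else if j = (w i).length then Sum.inl (q.tgt i)
  else if h : j - 1 < (w i).length - 1 then Sum.inr ⟨i, ⟨j - 1, h⟩⟩
  else Sum.inl (q.src i)

/-- The equality atoms produced by `ε`-expansions: `src i = tgt i` whenever `w i = ε`.
(The expansion collapses the equivalence they generate.) -/
def eqRel (q : CRPQ α V) (w : Fin q.k → List α) : RawVar q w → RawVar q w → Prop :=
  fun x y => ∃ i, w i = [] ∧ x = Sum.inl (q.src i) ∧ y = Sum.inl (q.tgt i)

/-- The expansion of the CRPQ `q` obtained by expanding each atom `i` with the word
`w i`: each atom is replaced by its `w i`-expansion, and equality atoms are collapsed. -/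
def expansion (q : CRPQ α V) [Finite V] (w : Fin q.k → List α) : CQ α where
  V := Quot (eqRel q w)
  finV := Finite.of_surjective (Quot.mk _) fun x => Quot.exists_rep x
  atoms := { t | ∃ (i : Fin q.k) (j : ℕ) (hj : j < (w i).length),
    t = (Quot.mk _ (node q w i j), (w i).get ⟨j, hj⟩, Quot.mk _ (node q w i (j + 1))) }

/-- `Exp q`: the set of all expansions of the CRPQ `q`. -/
def Exp (q : CRPQ α V) [Finite V] : Set (CQ α) :=
  { p | ∃ w : Fin q.k → List α, (∀ i, w i ∈ q.lang i) ∧ p = expansion q w }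

/-- `Expm q m`: the set of all `m`-expansions of the CRPQ `q`. -/
def Expm (q : CRPQ α V) [Finite V] (m : ℕ) : Set (CQ α) :=
  { p | ∃ w : Fin q.k → List α,
      (∀ i, w i ∈ q.lang i) ∧ (∀ i, (w i).length ≤ m) ∧ p = expansion q w }

/-! ## UCRPQs, satisfaction, containment, boundedness -/

/-- The set of expansions of a UCRPQ (a finite disjunction of CRPQs). -/
def ExpU (Q : List (CRPQ α V)) [Finite V] : Set (CQ α) :=
  { p | ∃ q ∈ Q, p ∈ Exp q }

/-- The set of `m`-expansions of a UCRPQ. -/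
def ExpmU (Q : List (CRPQ α V)) [Finite V] (m : ℕ) : Set (CQ α) :=
  { p | ∃ q ∈ Q, p ∈ Expm q m }

/-- Satisfaction of a (possibly infinite) disjunction of CQs by a graph database. -/
def SatSet (S : Set (CQ α)) (G : GDB α) : Prop := ∃ p ∈ S, p.homToG G

/-- `G ⊨ Q` for a UCRPQ `Q`: some expansion of `Q` maps homomorphically into `G`. -/
def Sat (Q : List (CRPQ α V)) [Finite V] (G : GDB α) : Prop := SatSet (ExpU Q) G

/-- Containment of queries (viewed as properties of graph databases):
every graph database satisfying the first satisfies the second. -/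
def Contained (P P' : GDB α → Prop) : Prop := ∀ G, P G → P' G

/-- Equivalence of queries (viewed as properties of graph databases). -/
def QEquiv (P P' : GDB α → Prop) : Prop := ∀ G, P G ↔ P' G

/-- A query is bounded iff it is equivalent to some UCQ (finite disjunction of CQs). -/
def Bounded (P : GDB α → Prop) : Prop :=
  ∃ Φ : List (CQ α), ∀ G, P G ↔ ∃ p ∈ Φ, p.homToG G


/-! ## The class UCRPQ(SSF, w*) -/

/-- An atom language in the class (SSF, w*): either a succinct star-free expression
(denoting a finite language), or `w*` for a word `w`. -/
inductive AtomLang (α : Type) : Type where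
  | ssf (L : Set (List α)) (h : L.Finite) : AtomLang α
  | star (w : List α) : AtomLang α

variable {α V : Type}

/-- The language denoted by an atom of the class (SSF, w*). -/
def AtomLang.language : AtomLang α → Set (List α)
  | .ssf L _ => L
  | .star w => { u | ∃ n, u = wpow w n }

/-- A CRPQ all of whose atom languages are SSF expressions or expressions `w*`. -/
structure SCRPQ (α V : Type) where
  k : ℕ
  src : Fin k → V
  lang : Fin k → AtomLang α
  tgt : Fin k → V

/-- The underlying CRPQ of an SCRPQ. -/
def SCRPQ.toCRPQ (q : SCRPQ α V) : CRPQ α V :=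
  ⟨q.k, q.src, fun i => (q.lang i).language, q.tgt⟩

/-- The underlying UCRPQ of a UCRPQ in the class (SSF, w*). -/
def toU (Q : List (SCRPQ α V)) : List (CRPQ α V) := Q.map SCRPQ.toCRPQ

/-- Satisfaction for UCRPQs of the class (SSF, w*). -/
def SatS (Q : List (SCRPQ α V)) [Finite V] (G : GDB α) : Prop := Sat (toU Q) G

/-- `AtomLang.cut m`: replace `w*` with `w^{≤m} = {w^n : n ≤ m}`; SSF atoms unchanged. -/
def AtomLang.cut (m : ℕ) : AtomLang α → AtomLang α
  | .ssf L h => .ssf L h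
  | .star w => .ssf (wpow w '' Set.Iic m) ((Set.finite_Iic m).image _)

/-- `q(m)` for a CRPQ: replace every expression `w*` with `w^{≤m}`. -/
def SCRPQ.cut (m : ℕ) (q : SCRPQ α V) : SCRPQ α V :=
  ⟨q.k, q.src, fun i => (q.lang i).cut m, q.tgt⟩

/-- `q(m)` for a UCRPQ: replace every expression `w*` with `w^{≤m}`. -/
def qcut (Q : List (SCRPQ α V)) (m : ℕ) : List (SCRPQ α V) := Q.map (SCRPQ.cut m)

/-- `‖Q‖`: number of atoms of the UCRPQ `Q`. -/
def natoms (Q : List (SCRPQ α V)) : ℕ := (Q.map SCRPQ.k).sum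

/-- The set `W` of words `w` such that `w*` labels a recursive atom of `Q`. -/
def recWords (Q : List (SCRPQ α V)) : Set (List α) :=
  { w | ∃ q ∈ Q, ∃ i : Fin q.k, q.lang i = AtomLang.star w }

/-- `N`: the maximum length of a word in the language of a non-recursive atom of `Q`. -/
noncomputable def nrBound (Q : List (SCRPQ α V)) : ℕ :=
  sSup { n | ∃ q ∈ Q, ∃ i : Fin q.k, ∃ (L : Set (List α)) (h : L.Finite),
    q.lang i = AtomLang.ssf L h ∧ ∃ u ∈ L, u.length = n }

/-- `Z := ‖Q‖³ · N · |vars(Q)| · Π_{w ∈ W} |w|`. -/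
noncomputable def Zbound (Q : List (SCRPQ α V)) [Fintype V] : ℕ :=
  natoms Q ^ 3 * nrBound Q * Fintype.card V * ∏ᶠ w ∈ recWords Q, w.length

/-- `Z⁺ := ‖Q‖ · Z + 1`. -/
noncomputable def Zplus (Q : List (SCRPQ α V)) [Fintype V] : ℕ :=
  natoms Q * Zbound Q + 1

/-! ## Letter-boundedness -/

/-- Membership in the class UCRPQ(SSF, a*): atoms are SSF or `a*` for a letter `a`. -/
def AtomLang.inSSFaStar : AtomLang α → Prop
  | .ssf _ _ => True
  | .star w => ∃ a, w = [a]

/-- Membership in the class UCRPQ(a, a*): every atom language is `{a}` or `{a}*`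
for a letter `a`. -/
def AtomLang.in_a_aStar : AtomLang α → Prop
  | .ssf L _ => ∃ a : α, L = {[a]}
  | .star w => ∃ a, w = [a]

/-- An atom language which is an SSF expression or `a*` only for letters `a ∉ A`. -/
def AtomLang.okOutside (A : Set α) : AtomLang α → Prop
  | .ssf _ _ => True
  | .star w => ∃ a, a ∉ A ∧ w = [a]

open Classical in
/-- Replace `a*` with `a^{≤m} = {ε, a, …, a^m}` for every letter `a ∈ A`. -/
noncomputable def AtomLang.restrict (A : Set α) (m : ℕ) : AtomLang α → AtomLang α
  | .ssf L h => .ssf L h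
  | .star w => if ∃ a ∈ A, w = [a]
      then .ssf (wpow w '' Set.Iic m) ((Set.finite_Iic m).image _)
      else .star w

/-- `q(A, m)` (also `q[A ↦ m]`) for a CRPQ. -/
noncomputable def SCRPQ.restrict (A : Set α) (m : ℕ) (q : SCRPQ α V) : SCRPQ α V :=
  ⟨q.k, q.src, fun i => (q.lang i).restrict A m, q.tgt⟩

/-- `Q(A, m)` (also `Q[A ↦ m]`): the result of replacing in `Q` every atom language
`a*` with `a ∈ A` by `a^{≤m}`. -/
noncomputable def qrestrict (Q : List (SCRPQ α V)) (A : Set α) (m : ℕ) :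
    List (SCRPQ α V) := Q.map (SCRPQ.restrict A m)

/-- `Q` is `A`-bounded: `Q` is equivalent to some UCRPQ whose atom languages are SSF
expressions or expressions `a*` only for letters `a ∉ A`. -/
def BddIn (Q : List (SCRPQ α V)) [Finite V] (A : Set α) : Prop :=
  ∃ (n : ℕ) (Q' : List (SCRPQ α (Fin n))),
    (∀ d ∈ Q', ∀ i : Fin d.k, (d.lang i).okOutside A) ∧ QEquiv (SatS Q) (SatS Q')

section Aux

variable {α : Type}

/-- The canonical graph database of a CQ. -/
def GDBof (p : CQ α) : GDB α := ⟨p.V, p.finV, p.atoms⟩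

/-- A walk in `G` from `x` to `y` labelled by the word `u`. -/
def HasWalk (G : GDB α) (x : G.V) (u : List α) (y : G.V) : Prop :=
  ∃ f : ℕ → G.V, f 0 = x ∧ f u.length = y ∧
    ∀ (j : ℕ) (hj : j < u.length), (f j, u.get ⟨j, hj⟩, f (j + 1)) ∈ G.edges

lemma wpow_single (a : α) (n : ℕ) : wpow [a] n = List.replicate n a := by
  induction n with
  | zero => rfl
  | succ n ih =>
      simp only [wpow, List.replicate_succ, List.flatten_cons] at *
      rw [ih]; rfl

lemma hasWalk_replicate (G : GDB α) (x y : G.V) (a : α) (n : ℕ) :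
    HasWalk G x (List.replicate n a) y ↔
    ∃ f : ℕ → G.V, f 0 = x ∧ f n = y ∧ ∀ j < n, (f j, a, f (j + 1)) ∈ G.edges := by
  simp [HasWalk, List.getElem_replicate]

lemma hasWalk_map {G G' : GDB α} (F : G.V → G'.V)
    (hF : ∀ x a y, (x, a, y) ∈ G.edges → (F x, a, F y) ∈ G'.edges)
    {x y : G.V} {u : List α} (h : HasWalk G x u y) : HasWalk G' (F x) u (F y) := by
  obtain ⟨f, h0, hn, he⟩ := h
  exact ⟨fun j => F (f j), by simp [h0], by simp [hn], fun j hj => hF _ _ _ (he j hj)⟩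

end Aux
section Aux2

variable {α : Type} {V' : Type} [Finite V']

lemma homToG_of_walks (c : CRPQ α V') (w : Fin c.k → List α) (G : GDB α)
    (v : V' → G.V) (hwalk : ∀ i, HasWalk G (v (c.src i)) (w i) (v (c.tgt i))) :
    ∃ h : (expansion c w).V → G.V,
      (∀ x, h (Quot.mk _ (Sum.inl x)) = v x) ∧
      (∀ x a y, (x, a, y) ∈ (expansion c w).atoms → (h x, a, h y) ∈ G.edges) := by
  choose f h0 hn he using hwalk
  set F0 : RawVar c w → G.V := fun z =>
    match z with
    | Sum.inl x => v x
    | Sum.inr p => f p.1 (p.2.val + 1) with hF0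
  have hresp : ∀ x y, eqRel c w x y → F0 x = F0 y := by
    rintro x y ⟨i, hwi, rfl, rfl⟩
    show v (c.src i) = v (c.tgt i)
    have h1 := h0 i
    have h2 := hn i
    rw [hwi] at h2
    simp at h2
    rw [← h1, ← h2]
  refine ⟨Quot.lift F0 hresp, fun x => rfl, ?_⟩
  have key : ∀ (i : Fin c.k) (j : ℕ), j ≤ (w i).length →
      Quot.lift F0 hresp (Quot.mk _ (node c w i j)) = f i j := by
    intro i j hj
    show F0 (node c w i j) = f i j
    by_cases h1 : j = 0
    · subst h1
      have e : node c w i 0 = Sum.inl (c.src i) := by simp [node]; rfl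
      rw [e]; exact (h0 i).symm
    · by_cases h2 : j = (w i).length
      · have e : node c w i j = Sum.inl (c.tgt i) := by
          unfold node; exact (if_neg h1).trans (if_pos h2)
        rw [e]; subst h2; exact (hn i).symm
      · have h3 : j - 1 < (w i).length - 1 := by omega
        have e : node c w i j = Sum.inr ⟨i, ⟨j - 1, h3⟩⟩ := by
          unfold node; exact (if_neg h1).trans ((if_neg h2).trans (dif_pos h3))
        rw [e]
        show f i ((j - 1) + 1) = f i j
        congr 1
        omega
  rintro x a y ⟨i, j, hj, heq⟩
  obtain ⟨e1, e2, e3⟩ : x = _ ∧ a = _ ∧ y = _ :=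
    ⟨congrArg Prod.fst heq, congrArg (fun t => t.2.1) heq, congrArg (fun t => t.2.2) heq⟩
  subst e1; subst e2; subst e3
  rw [key i j (le_of_lt hj), key i (j + 1) hj]
  exact he i j hj

lemma walks_of_homToG (c : CRPQ α V') (w : Fin c.k → List α) (G : GDB α)
    (h : (expansion c w).homToG G) :
    ∃ v : V' → G.V, ∀ i, HasWalk G (v (c.src i)) (w i) (v (c.tgt i)) := by
  obtain ⟨h, hh⟩ := h
  refine ⟨fun x => h (Quot.mk _ (Sum.inl x)), fun i => ?_⟩
  refine ⟨fun j => h (Quot.mk _ (node c w i j)), ?_, ?_, ?_⟩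
  · show h (Quot.mk _ (node c w i 0)) = h (Quot.mk _ (Sum.inl (c.src i)))
    simp [node]
  · show h (Quot.mk _ (node c w i (w i).length)) = h (Quot.mk _ (Sum.inl (c.tgt i)))
    by_cases hl : (w i).length = 0
    · rw [hl]
      have hnode : node c w i 0 = Sum.inl (c.src i) := by simp [node]; rfl
      rw [hnode]
      exact congrArg h (Quot.sound ⟨i, List.length_eq_zero_iff.mp hl, rfl, rfl⟩)
    · congr 1
      simp [node, hl]
      rfl
  · intro j hj
    exact hh _ _ _ ⟨i, j, hj, rfl⟩

end Aux2
section Aux3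

variable {α : Type} {V' : Type} [Finite V']

lemma walks_of_satS {Q : List (SCRPQ α V')} {G : GDB α} (h : SatS Q G) :
    ∃ d ∈ Q, ∃ v : V' → G.V, ∀ i, ∃ u ∈ (d.lang i).language,
      HasWalk G (v (d.src i)) u (v (d.tgt i)) := by
  obtain ⟨p, ⟨c, hc, w, hw, rfl⟩, hhom⟩ := h
  obtain ⟨d, hd, rfl⟩ := List.mem_map.mp hc
  obtain ⟨v, hv⟩ := walks_of_homToG _ w G hhom
  exact ⟨d, hd, v, fun i => ⟨w i, hw i, hv i⟩⟩

lemma satS_of_walks {Q : List (SCRPQ α V')} {G : GDB α} {d : SCRPQ α V'} (hd : d ∈ Q)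
    (v : V' → G.V) (w : Fin d.k → List α) (hw : ∀ i, w i ∈ (d.lang i).language)
    (hwalk : ∀ i, HasWalk G (v (d.src i)) (w i) (v (d.tgt i))) : SatS Q G := by
  obtain ⟨h, -, hh⟩ := homToG_of_walks d.toCRPQ w G v hwalk
  exact ⟨expansion d.toCRPQ w, ⟨d.toCRPQ, List.mem_map_of_mem hd, w, hw, rfl⟩, h, hh⟩

lemma satS_self {Q : List (SCRPQ α V')} {d : SCRPQ α V'} (hd : d ∈ Q)
    {w : Fin d.k → List α} (hw : ∀ i, w i ∈ (d.lang i).language) :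
    SatS Q (GDBof (expansion d.toCRPQ w)) :=
  ⟨expansion d.toCRPQ w, ⟨d.toCRPQ, List.mem_map_of_mem hd, w, hw, rfl⟩,
    id, fun _ _ _ hx => hx⟩

/-- Renaming the variables of an SCRPQ. -/
def SCRPQ.rename {V'' : Type} (g : V' → V'') (e : SCRPQ α V') : SCRPQ α V'' :=
  ⟨e.k, g ∘ e.src, e.lang, g ∘ e.tgt⟩

lemma satS_rename {V'' : Type} [Finite V''] (ev : V' ≃ V'') (Q : List (SCRPQ α V'))
    (G : GDB α) : SatS (Q.map (SCRPQ.rename ev)) G ↔ SatS Q G := by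
  constructor
  · intro h
    obtain ⟨d', hd', v, hv⟩ := walks_of_satS h
    obtain ⟨d, hd, rfl⟩ := List.mem_map.mp hd'
    choose u hu hwalk using hv
    exact satS_of_walks hd (fun x => v (ev x)) u hu hwalk
  · intro h
    obtain ⟨d, hd, v, hv⟩ := walks_of_satS h
    choose u hu hwalk using hv
    refine satS_of_walks (List.mem_map_of_mem hd) (fun x => v (ev.symm x)) u hu
      (fun i => ?_)
    show HasWalk G (v (ev.symm (ev (d.src i)))) (u i) (v (ev.symm (ev (d.tgt i))))
    rw [Equiv.symm_apply_apply, Equiv.symm_apply_apply]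
    exact hwalk i

end Aux3
section Aux4

variable {α : Type} {V' : Type} [Finite V']

lemma shorten (c : CRPQ α V') (s : Fin c.k → List α) (a : α) (N : ℕ)
    (hpos : ∀ (j : Fin c.k) (pos : ℕ) (hp : pos < (s j).length),
      (s j).get ⟨pos, hp⟩ = a → pos ≤ N)
    {x y : (expansion c s).V} {n : ℕ}
    (hex : ∃ f : ℕ → (expansion c s).V, f 0 = x ∧ f n = y ∧
      ∀ j < n, (f j, a, f (j + 1)) ∈ (expansion c s).atoms) :
    ∃ n' ≤ c.k * (N + 1), ∃ f : ℕ → (expansion c s).V, f 0 = x ∧ f n' = y ∧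
      ∀ j < n', (f j, a, f (j + 1)) ∈ (expansion c s).atoms := by
  classical
  set P : ℕ → Prop := fun m => ∃ f : ℕ → (expansion c s).V, f 0 = x ∧ f m = y ∧
      ∀ j < m, (f j, a, f (j + 1)) ∈ (expansion c s).atoms with hP
  have hex' : ∃ m, P m := ⟨n, hex⟩
  set n₀ := Nat.find hex' with hn₀
  obtain ⟨f, hf0, hfn, hfe⟩ := Nat.find_spec hex'
  have hinj : ∀ i j, i ≤ n₀ → j ≤ n₀ → f i = f j → i = j := by
    suffices hs : ∀ i j, i < j → j ≤ n₀ → f i ≠ f j by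
      intro i j hi hj hij
      rcases lt_trichotomy i j with h | h | h
      · exact absurd hij (hs i j h hj)
      · exact h
      · exact absurd hij.symm (hs j i h hi)
    intro i j hij hj hfeq
    set d := j - i with hd
    have hd0 : 0 < d := by omega
    have hPd : P (n₀ - d) := by
      refine ⟨fun m => if m < i then f m else f (m + d), ?_, ?_, ?_⟩
      · by_cases h0 : 0 < i
        · simpa [h0] using hf0
        · have hi0 : i = 0 := by omega
          have : ¬ (0 < i) := by omega
          simp only [if_neg this]
          have hj' : 0 + d = j := by omega
          rw [hj', ← hfeq, hi0, hf0]
      · show (if n₀ - d < i then f (n₀ - d) else f (n₀ - d + d)) = y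
        have h1 : ¬ (n₀ - d < i) := by omega
        rw [if_neg h1]
        have h2 : n₀ - d + d = n₀ := by omega
        rw [h2, hfn]
      · intro m hm
        show ((if m < i then f m else f (m + d)), a,
          (if m + 1 < i then f (m + 1) else f (m + 1 + d))) ∈ (expansion c s).atoms
        by_cases hmi : m + 1 < i
        · rw [if_pos (by omega), if_pos hmi]
          exact hfe m (by omega)
        · by_cases hmi2 : m < i
          · rw [if_pos hmi2, if_neg (by omega)]
            have e1 : m + 1 + d = j := by omega
            have e2 : i = m + 1 := by omega
            rw [e1, ← hfeq, e2]
            exact hfe m (by omega)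
          · rw [if_neg hmi2, if_neg (by omega)]
            have e1 : m + 1 + d = (m + d) + 1 := by omega
            rw [e1]
            exact hfe (m + d) (by omega)
    have hlt : n₀ - d < n₀ := by omega
    exact Nat.find_min hex' hlt hPd
  have hsel : ∀ m : Fin n₀, ∃ (i : Fin c.k) (pos : ℕ),
      pos ≤ N ∧ f m.val = Quot.mk _ (node c s i pos) := by
    intro m
    obtain ⟨i, pos, hp, heq⟩ := hfe m.val m.isLt
    obtain ⟨e1, e2, e3⟩ : f m.val = _ ∧ a = _ ∧ f (m.val + 1) = _ :=
      ⟨congrArg Prod.fst heq, congrArg (fun t => t.2.1) heq, congrArg (fun t => t.2.2) heq⟩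
    exact ⟨i, pos, hpos i pos hp e2.symm, e1⟩
  choose gi gpos gle geq using hsel
  have hinj2 : Function.Injective
      (fun m : Fin n₀ => ((gi m, ⟨gpos m, by have := gle m; omega⟩) :
        Fin c.k × Fin (N + 1))) := by
    intro m m' hmm'
    simp only [Prod.mk.injEq, Fin.mk.injEq] at hmm'
    apply Fin.ext
    apply hinj m.val m'.val (le_of_lt m.isLt) (le_of_lt m'.isLt)
    rw [geq m, geq m', hmm'.1, hmm'.2]
  have hle : n₀ ≤ c.k * (N + 1) := by
    have := Fintype.card_le_of_injective _ hinj2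
    simpa using this
  exact ⟨n₀, hle, Nat.find_spec hex'⟩

/-- Maximum length of words in SSF atom languages. -/
noncomputable def langBound : AtomLang α → ℕ
  | .ssf L _ => sSup (List.length '' L)
  | .star _ => 0

lemma langBound_spec {L : Set (List α)} {h : L.Finite} {u : List α} (hu : u ∈ L) :
    u.length ≤ langBound (AtomLang.ssf L h) :=
  le_csSup ((h.image _).bddAbove) ⟨u, hu, rfl⟩

noncomputable def qBound (e : SCRPQ α V') : ℕ :=
  Finset.univ.sup fun j : Fin e.k => langBound (e.lang j)

noncomputable def QBound (Q : List (SCRPQ α V')) : ℕ := (Q.map qBound).sum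

lemma qBound_le {Q : List (SCRPQ α V')} {e : SCRPQ α V'} (he : e ∈ Q) :
    qBound e ≤ QBound Q :=
  List.single_le_sum (fun x _ => Nat.zero_le x) _ (List.mem_map_of_mem he)

lemma k_le_natoms {Q : List (SCRPQ α V')} {e : SCRPQ α V'} (he : e ∈ Q) :
    e.k ≤ natoms Q :=
  List.single_le_sum (fun x _ => Nat.zero_le x) _ (List.mem_map_of_mem he)

lemma hpos_of_okOutside {A : Set α} {Q : List (SCRPQ α V')} {e : SCRPQ α V'} (he : e ∈ Q)
    (hok : ∀ j : Fin e.k, (e.lang j).okOutside A) (s : Fin e.k → List α)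
    (hs : ∀ j, s j ∈ (e.lang j).language) {a : α} (ha : a ∈ A) :
    ∀ (j : Fin e.k) (pos : ℕ) (hp : pos < (s j).length),
      (s j).get ⟨pos, hp⟩ = a → pos ≤ QBound Q := by
  intro j pos hp hget
  have hsj := hs j
  have hokj := hok j
  cases hL : e.lang j with
  | ssf L hfin =>
      rw [hL] at hsj
      have h1 : (s j).length ≤ langBound (AtomLang.ssf L hfin) := langBound_spec hsj
      have h2 : langBound (e.lang j) ≤ qBound e :=
        Finset.le_sup (f := fun j => langBound (e.lang j)) (Finset.mem_univ j)
      rw [hL] at h2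
      have := qBound_le he
      omega
  | star w' =>
      rw [hL] at hokj
      obtain ⟨b, hbA, rfl⟩ := hokj
      rw [hL] at hsj
      obtain ⟨nb, hnb⟩ := hsj
      have hrep : s j = List.replicate nb b := by rw [hnb, wpow_single]
      have hmem : (s j).get ⟨pos, hp⟩ ∈ s j := (s j).get_mem ⟨pos, hp⟩
      rw [hget, hrep] at hmem
      have hab : a = b := List.eq_of_mem_replicate hmem
      exact absurd (hab ▸ ha) hbA
end Aux4
section Aux5

variable {α : Type}

lemma restrict_star_pos {S : Set α} {b : α} (hb : b ∈ S) (m : ℕ) :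
    ((AtomLang.star [b]).restrict S m).language = wpow [b] '' Set.Iic m := by
  simp only [AtomLang.restrict]
  rw [if_pos ⟨b, hb, rfl⟩]
  rfl

lemma restrict_star_neg {S : Set α} {b : α} (hb : b ∉ S) (m : ℕ) :
    (AtomLang.star [b]).restrict S m = AtomLang.star [b] := by
  simp only [AtomLang.restrict]
  rw [if_neg]
  rintro ⟨a, haS, heq⟩
  have : b = a := by simpa using heq
  exact hb (this ▸ haS)

lemma restrict_lang_sub (S : Set α) (m : ℕ) (l : AtomLang α) :
    (l.restrict S m).language ⊆ l.language := by
  cases l with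
  | ssf L h => exact fun u hu => hu
  | star w =>
      simp only [AtomLang.restrict]
      split_ifs with h
      · rintro u ⟨n, -, rfl⟩
        exact ⟨n, rfl⟩
      · exact fun u hu => hu

lemma restrict_ok {l : AtomLang α} (hl : l.in_a_aStar) (S : Set α) (m : ℕ) :
    (l.restrict S m).okOutside S := by
  cases l with
  | ssf L h => trivial
  | star w =>
      obtain ⟨a, rfl⟩ := hl
      by_cases ha : a ∈ S
      · simp only [AtomLang.restrict]
        rw [if_pos ⟨a, ha, rfl⟩]
        trivial
      · rw [restrict_star_neg ha]
        exact ⟨a, ha, rfl⟩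

lemma satS_restrict_imp {V' : Type} [Finite V'] (q : List (SCRPQ α V')) (S : Set α)
    (m : ℕ) (G : GDB α) (h : SatS (qrestrict q S m) G) : SatS q G := by
  obtain ⟨d', hd', v, hv⟩ := walks_of_satS h
  obtain ⟨d, hd, rfl⟩ := List.mem_map.mp hd'
  choose u hu hwalk using hv
  exact satS_of_walks hd v u (fun i => restrict_lang_sub S m (d.lang i) (hu i)) hwalk

lemma main_forward {V : Type} [Fintype V] (q : List (SCRPQ α V))
    (hclass : ∀ d ∈ q, ∀ i : Fin d.k, (d.lang i).in_a_aStar) (A B : Set α)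
    {n1 n2 : ℕ} (Q1 : List (SCRPQ α (Fin n1))) (Q2 : List (SCRPQ α (Fin n2)))
    (hok1 : ∀ d ∈ Q1, ∀ i : Fin d.k, (d.lang i).okOutside A)
    (hok2 : ∀ d ∈ Q2, ∀ i : Fin d.k, (d.lang i).okOutside B)
    (heq1 : QEquiv (SatS q) (SatS Q1)) (heq2 : QEquiv (SatS q) (SatS Q2)) :
    ∃ m : ℕ, ∀ G : GDB α, SatS q G → SatS (qrestrict q (A ∪ B) m) G := by
  classical
  set K1 := natoms Q1 * (QBound Q1 + 1) with hK1
  set K2 := natoms Q2 * (QBound Q2 + 1) with hK2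
  set K3 := natoms q * (K1 + 1) with hK3
  refine ⟨max K2 K3, fun G hG => ?_⟩
  -- Step 0: expansion of q mapping into G
  obtain ⟨d, hd, v, hv⟩ := walks_of_satS hG
  choose w₀ hw₀ hwalk₀ using hv
  obtain ⟨hpG, -, hhpG⟩ := homToG_of_walks d.toCRPQ w₀ G v hwalk₀
  have hsatp : SatS q (GDBof (expansion d.toCRPQ w₀)) := satS_self hd hw₀
  -- Step 1: Q1 holds on the canonical database of p
  obtain ⟨e1, he1, v1, hv1⟩ := walks_of_satS ((heq1 _).mp hsatp)
  choose s1 hs1 hwalk1 using hv1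
  obtain ⟨hrp, -, hhrp⟩ := homToG_of_walks e1.toCRPQ s1 _ v1 hwalk1
  have hsatr : SatS q (GDBof (expansion e1.toCRPQ s1)) :=
    (heq1 _).mpr (satS_self he1 hs1)
  -- Step 2: q holds on the canonical database of r; shorten A-letters there
  obtain ⟨d2, hd2, v2, hv2⟩ := walks_of_satS hsatr
  choose t ht htwalk using hv2
  have step2 : ∀ i : Fin d2.k, ∃ u, u ∈ (d2.lang i).language ∧
      HasWalk (GDBof (expansion d.toCRPQ w₀))
        (hrp (v2 (d2.src i))) u (hrp (v2 (d2.tgt i))) ∧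
      ∀ (pos : ℕ) (hp : pos < u.length), u.get ⟨pos, hp⟩ ∈ A → pos ≤ K1 := by
    intro i
    have hcl := hclass d2 hd2 i
    cases hL : d2.lang i with
    | ssf L hfin =>
        rw [hL] at hcl
        obtain ⟨b, rfl⟩ := hcl
        have hti := ht i
        rw [hL] at hti
        have htib : t i = [b] := hti
        refine ⟨[b], ?_, ?_, ?_⟩
        · rfl
        · have := htwalk i
          rw [htib] at this
          exact hasWalk_map hrp hhrp this
        · intro pos hp _
          simp at hp
          omega
    | star w' =>
        rw [hL] at hcl
        obtain ⟨b, rfl⟩ := hcl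
        have hti := ht i
        rw [hL] at hti
        obtain ⟨nb, hnb⟩ := hti
        have hwrep : HasWalk (GDBof (expansion e1.toCRPQ s1))
            (v2 (d2.src i)) (List.replicate nb b) (v2 (d2.tgt i)) := by
          have := htwalk i
          rw [hnb, wpow_single] at this
          exact this
        by_cases hbA : b ∈ A
        · rw [hasWalk_replicate] at hwrep
          obtain ⟨n', hn', hw'⟩ := shorten e1.toCRPQ s1 b (QBound Q1)
            (hpos_of_okOutside he1 (hok1 e1 he1) s1 hs1 hbA) hwrep
          have hn'K : n' ≤ K1 :=
            le_trans hn' (Nat.mul_le_mul_right _ (k_le_natoms he1))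
          refine ⟨List.replicate n' b, ?_, ?_, ?_⟩
          · exact ⟨n', (wpow_single b n').symm⟩
          · exact hasWalk_map hrp hhrp ((hasWalk_replicate (GDBof (expansion e1.toCRPQ s1)) _ _ b n').mpr hw')
          · intro pos hp _
            simp at hp
            omega
        · refine ⟨List.replicate nb b, ?_, ?_, ?_⟩
          · exact ⟨nb, (wpow_single b nb).symm⟩
          · exact hasWalk_map hrp hhrp hwrep
          · intro pos hp hmem
            simp only [List.get_eq_getElem, List.getElem_replicate] at hmem
            exact absurd hmem hbA
  choose t' ht'mem ht'walk ht'prop using step2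
  obtain ⟨hp2p, -, hhp2p⟩ := homToG_of_walks d2.toCRPQ t' _ (fun x => hrp (v2 x)) ht'walk
  have hsatp2 : SatS q (GDBof (expansion d2.toCRPQ t')) := satS_self hd2 ht'mem
  -- Step 3: Q2 holds on the canonical database of p2
  obtain ⟨e2, he2, v3, hv3⟩ := walks_of_satS ((heq2 _).mp hsatp2)
  choose s2 hs2 hwalk2 using hv3
  obtain ⟨hr2, -, hhr2⟩ := homToG_of_walks e2.toCRPQ s2 _ v3 hwalk2
  have hsatr2 : SatS q (GDBof (expansion e2.toCRPQ s2)) :=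
    (heq2 _).mpr (satS_self he2 hs2)
  -- Step 4: q holds on the canonical database of r2
  obtain ⟨d3, hd3, v4, hv4⟩ := walks_of_satS hsatr2
  choose t3 ht3 ht3walk using hv4
  -- the final homomorphism into G
  have hF : ∀ x a y, (x, a, y) ∈ (GDBof (expansion e2.toCRPQ s2)).edges →
      (hpG (hp2p (hr2 x)), a, hpG (hp2p (hr2 y))) ∈ G.edges :=
    fun x a y hxy => hhpG _ _ _ (hhp2p _ _ _ (hhr2 _ _ _ hxy))
  have hF2 : ∀ x a y, (x, a, y) ∈ (GDBof (expansion d2.toCRPQ t')).edges →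
      (hpG (hp2p x), a, hpG (hp2p y)) ∈ G.edges :=
    fun x a y hxy => hhpG _ _ _ (hhp2p _ _ _ hxy)
  have final : ∀ i : Fin d3.k, ∃ u,
      u ∈ ((d3.lang i).restrict (A ∪ B) (max K2 K3)).language ∧
      HasWalk G (hpG (hp2p (hr2 (v4 (d3.src i))))) u
        (hpG (hp2p (hr2 (v4 (d3.tgt i))))) := by
    intro i
    have hcl := hclass d3 hd3 i
    cases hL : d3.lang i with
    | ssf L hfin =>
        refine ⟨t3 i, ?_, ?_⟩
        · have h := ht3 i
          rw [hL] at h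
          exact h
        · exact hasWalk_map _ hF (ht3walk i)
    | star w' =>
        rw [hL] at hcl
        obtain ⟨b, rfl⟩ := hcl
        have hti := ht3 i
        rw [hL] at hti
        obtain ⟨nb, hnb⟩ := hti
        have hwrep : HasWalk (GDBof (expansion e2.toCRPQ s2))
            (v4 (d3.src i)) (List.replicate nb b) (v4 (d3.tgt i)) := by
          have := ht3walk i
          rw [hnb, wpow_single] at this
          exact this
        by_cases hbB : b ∈ B
        · rw [hasWalk_replicate] at hwrep
          obtain ⟨n', hn', hw'⟩ := shorten e2.toCRPQ s2 b (QBound Q2)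
            (hpos_of_okOutside he2 (hok2 e2 he2) s2 hs2 hbB) hwrep
          have hn'K : n' ≤ max K2 K3 :=
            le_trans (le_trans hn' (Nat.mul_le_mul_right _ (k_le_natoms he2)))
              (le_max_left _ _)
          refine ⟨List.replicate n' b, ?_, ?_⟩
          · rw [restrict_star_pos (S := A ∪ B) (Set.mem_union_right A hbB)]
            exact ⟨n', hn'K, wpow_single b n'⟩
          · exact hasWalk_map _ hF ((hasWalk_replicate (GDBof (expansion e2.toCRPQ s2)) _ _ b n').mpr hw')
        · by_cases hbA : b ∈ A
          · -- push to p2 and shorten there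
            have hwp2 : HasWalk (GDBof (expansion d2.toCRPQ t'))
                (hr2 (v4 (d3.src i))) (List.replicate nb b)
                (hr2 (v4 (d3.tgt i))) := hasWalk_map hr2 hhr2 hwrep
            rw [hasWalk_replicate] at hwp2
            have hposA : ∀ (j : Fin d2.k) (pos : ℕ) (hp : pos < (t' j).length),
                (t' j).get ⟨pos, hp⟩ = b → pos ≤ K1 :=
              fun j pos hp hget => ht'prop j pos hp (hget ▸ hbA)
            obtain ⟨n', hn', hw'⟩ := shorten d2.toCRPQ t' b K1 hposA hwp2
            have hn'K : n' ≤ max K2 K3 := by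
              have h1 : d2.k * (K1 + 1) ≤ K3 := by
                rw [hK3]
                exact Nat.mul_le_mul_right _ (k_le_natoms hd2)
              exact le_trans (le_trans hn' h1) (le_max_right _ _)
            refine ⟨List.replicate n' b, ?_, ?_⟩
            · rw [restrict_star_pos (S := A ∪ B) (Set.mem_union_left B hbA)]
              exact ⟨n', hn'K, wpow_single b n'⟩
            · exact hasWalk_map _ hF2 ((hasWalk_replicate (GDBof (expansion d2.toCRPQ t')) _ _ b n').mpr hw')
          · refine ⟨List.replicate nb b, ?_, ?_⟩
            · rw [restrict_star_neg (show b ∉ A ∪ B by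
                rintro (h | h) <;> [exact hbA h; exact hbB h])]
              exact ⟨nb, (wpow_single b nb).symm⟩
            · exact hasWalk_map _ hF hwrep
  choose u hu huwalk using final
  exact satS_of_walks (Q := qrestrict q (A ∪ B) (max K2 K3))
    (List.mem_map_of_mem hd3) (fun x => hpG (hp2p (hr2 (v4 x)))) u hu huwalk

end Aux5
/-- if `q ∈ UCRPQ(a, a*)` is `A`-bounded and `B`-bounded then it is
`(A ∪ B)`-bounded. -/
theorem statement13 {α V : Type} [Fintype α] [Fintype V] (q : List (SCRPQ α V))
    (hclass : ∀ d ∈ q, ∀ i : Fin d.k, (d.lang i).in_a_aStar) (A B : Set α)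
    (hA : BddIn q A) (hB : BddIn q B) : BddIn q (A ∪ B) := by
  obtain ⟨n1, Q1, hok1, heq1⟩ := hA
  obtain ⟨n2, Q2, hok2, heq2⟩ := hB
  obtain ⟨m, hm⟩ := main_forward q hclass A B Q1 Q2 hok1 hok2 heq1 heq2
  refine ⟨Fintype.card V,
    (qrestrict q (A ∪ B) m).map (SCRPQ.rename (Fintype.equivFin V)), ?_, ?_⟩
  · intro d' hd' i
    obtain ⟨d'', hd'', rfl⟩ := List.mem_map.mp hd'
    obtain ⟨d3, hd3, rfl⟩ := List.mem_map.mp hd''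
    exact restrict_ok (hclass d3 hd3 i) (A ∪ B) m
  · intro G
    rw [satS_rename (Fintype.equivFin V) (qrestrict q (A ∪ B) m) G]
    exact ⟨hm G, satS_restrict_imp q (A ∪ B) m G⟩

end Paper
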